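/- Let $X$ be a Banach space and $\beta \in (0,2]$. Then every nonempty relatively weakly open subset of $B_X$ has diameter at least $\beta$ if and only if every nonempty relatively weakly open subset of $B_X$ has Kuratowski measure of non-compactness at least $\beta$. -/

import Mathlib

open Metric Set Pointwise Filter Topology

variable {X : Type*} [NormedAddCommGroup X] [NormedSpace ℝ X]

def sliceSet (f : X →L[ℝ] ℝ) (δ : ℝ) : Set X :=
  {y ∈ closedBall (0 : X) 1 | 1 - δ < f y}

def IsSlice (S : Set X) : Prop :=
  ∃ (f : X →L[ℝ] ℝ) (δ : ℝ), ‖f‖ = 1 ∧ 0 < δ ∧ S = sliceSet f δ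

def IsCCS (C : Set X) : Prop :=
  ∃ (n : ℕ) (l : Fin n → ℝ) (S : Fin n → Set X),
    (∀ i, 0 < l i) ∧ (∑ i, l i) = 1 ∧ (∀ i, IsSlice (S i)) ∧
    C = ∑ i, l i • S i

def RelWeakOpen (V : Set X) : Prop :=
  ∃ U : Set X, IsOpen (show Set (WeakSpace ℝ X) from U) ∧ V = U ∩ closedBall 0 1

def weakClosure (A : Set X) : Set X :=
  @closure (WeakSpace ℝ X) _ A

def SuperDeltaPoint (x : X) : Prop :=
  ∀ V : Set X, RelWeakOpen V → x ∈ V → ∀ ε > 0, ∃ y ∈ V, 2 - ε < ‖x - y‖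

def SuperDaugavetPoint (x : X) : Prop :=
  ∀ V : Set X, RelWeakOpen V → V.Nonempty → ∀ ε > 0, ∃ y ∈ V, 2 - ε < ‖x - y‖

def CcsDeltaPoint (x : X) : Prop :=
  ∀ C : Set X, IsCCS C → x ∈ C → ∀ ε > 0, ∃ y ∈ C, 2 - ε < ‖x - y‖

def CcsDaugavetPoint (x : X) : Prop :=
  ∀ C : Set X, IsCCS C → ∀ ε > 0, ∃ y ∈ C, 2 - ε < ‖x - y‖

noncomputable def kuratowski {X : Type*} [NormedAddCommGroup X] (A : Set X) : ℝ :=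
  sInf {ε : ℝ | 0 ≤ ε ∧ ∃ (n : ℕ) (c : Fin n → Set X),
    A ⊆ ⋃ i, c i ∧ ∀ i, EMetric.diam (c i) ≤ ENNReal.ofReal ε}


lemma cover_lemma {T : Type*} [TopologicalSpace T] {ι : Type*} (D : ι → Set T) (B : Set T)
    (hD : ∀ i, IsClosed (D i)) :
    ∀ s : Finset ι, ∀ U : Set T, IsOpen U → (U ∩ B).Nonempty →
      (U ∩ B ⊆ ⋃ i ∈ s, D i) →
      ∃ i ∈ s, ∃ U' : Set T, IsOpen U' ∧ (U' ∩ B).Nonempty ∧ U' ∩ B ⊆ D i := by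
  classical
  intro s
  induction s using Finset.induction with
  | empty =>
    intro U _ hne hsub
    obtain ⟨x, hx⟩ := hne
    simpa using hsub hx
  | @insert a s hanotin ih =>
    intro U hU hne hsub
    by_cases h : ((U ∩ (D a)ᶜ) ∩ B).Nonempty
    · have hsub' : (U ∩ (D a)ᶜ) ∩ B ⊆ ⋃ i ∈ s, D i := by
        intro x hx
        have hx' : x ∈ ⋃ i ∈ insert a s, D i := hsub ⟨hx.1.1, hx.2⟩
        simp only [Set.mem_iUnion, exists_prop] at hx' ⊢
        obtain ⟨i, hi, hxi⟩ := hx'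
        rcases Finset.mem_insert.mp hi with rfl | hi
        · exact absurd hxi hx.1.2
        · exact ⟨i, hi, hxi⟩
      obtain ⟨i, his, hres⟩ := ih (U ∩ (D a)ᶜ) (hU.inter (hD a).isOpen_compl) h hsub'
      exact ⟨i, Finset.mem_insert_of_mem his, hres⟩
    · refine ⟨a, Finset.mem_insert_self a s, U, hU, hne, ?_⟩
      intro x hx
      by_contra hxa
      exact h ⟨x, ⟨hx.1, hxa⟩, hx.2⟩

lemma weakClosure_dist_le {A : Set X} {ε : ℝ} (hε : 0 ≤ ε)
    (hA : EMetric.diam A ≤ ENNReal.ofReal ε)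
    {x y : X} (hx : x ∈ weakClosure A) (hy : y ∈ weakClosure A) : dist x y ≤ ε := by
  rcases eq_or_ne x y with rfl | hxy
  · simpa using hε
  obtain ⟨f, hf1, hfxy⟩ := exists_dual_vector ℝ (x - y) (norm_ne_zero_iff.mpr (sub_ne_zero.mpr hxy))
  have hcont : Continuous fun z : WeakSpace ℝ X => f z :=
    WeakBilin.eval_continuous (topDualPairing ℝ X).flip f
  have hmaps : Set.MapsTo (fun z : WeakSpace ℝ X => f z) A (f '' A) :=
    fun a ha => Set.mem_image_of_mem _ ha
  have hxc : f x ∈ closure (f '' A) :=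
    @map_mem_closure (WeakSpace ℝ X) ℝ _ _ _ _ _ _ hcont hx hmaps
  have hyc : f y ∈ closure (f '' A) :=
    @map_mem_closure (WeakSpace ℝ X) ℝ _ _ _ _ _ _ hcont hy hmaps
  have hlip : LipschitzWith ‖f‖₊ f := f.lipschitz
  have hed : EMetric.diam (closure (f '' A)) ≤ ENNReal.ofReal ε := by
    show Metric.ediam (closure (f '' A)) ≤ _
    rw [Metric.ediam_closure]
    calc EMetric.diam (f '' A) ≤ ‖f‖₊ * EMetric.diam A := hlip.ediam_image_le A
    _ = EMetric.diam A := by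
        have : (‖f‖₊ : ENNReal) = 1 := by
          simp [← ENNReal.coe_one, ENNReal.coe_inj, ← NNReal.coe_inj, hf1]
        rw [this, one_mul]
    _ ≤ ENNReal.ofReal ε := hA
  have hde : edist (f x) (f y) ≤ ENNReal.ofReal ε :=
    le_trans (EMetric.edist_le_diam_of_mem hxc hyc) hed
  have hd : dist (f x) (f y) ≤ ε := by
    rw [edist_dist, ENNReal.ofReal_le_ofReal_iff hε] at hde
    exact hde
  have hfeq : ‖x - y‖ = f x - f y := by
    have h2 := hfxy
    rw [RCLike.ofReal_real_eq_id] at h2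
    simp only [map_sub, id] at h2
    linarith
  calc dist x y = ‖x - y‖ := dist_eq_norm x y
  _ = f x - f y := hfeq
  _ ≤ |f x - f y| := le_abs_self _
  _ = dist (f x) (f y) := (Real.dist_eq _ _).symm
  _ ≤ ε := hd

theorem weakOpen_diam_iff_kuratowski {X : Type*} [NormedAddCommGroup X]
    [NormedSpace ℝ X] [CompleteSpace X] (β : ℝ) (hβ : β ∈ Set.Ioc (0 : ℝ) 2) :
    (∀ V : Set X, RelWeakOpen V → V.Nonempty → β ≤ Metric.diam V) ↔
    (∀ V : Set X, RelWeakOpen V → V.Nonempty → β ≤ kuratowski V) := by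
  obtain ⟨hβ0, hβ2⟩ := hβ
  constructor
  · intro hdiam V hV hne
    have hbdd : BddBelow {ε : ℝ | 0 ≤ ε ∧ ∃ (n : ℕ) (c : Fin n → Set X),
        V ⊆ ⋃ i, c i ∧ ∀ i, EMetric.diam (c i) ≤ ENNReal.ofReal ε} :=
      ⟨0, fun ε hε => hε.1⟩
    obtain ⟨U, hU, hVeq⟩ := hV
    have hVsub : V ⊆ closedBall (0 : X) 1 := by rw [hVeq]; exact Set.inter_subset_right
    have hVbdd : Bornology.IsBounded V := (Metric.isBounded_closedBall).subset hVsub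
    have hVtop : EMetric.diam V ≠ ⊤ := hVbdd.ediam_ne_top
    have hmem : Metric.diam V ∈ {ε : ℝ | 0 ≤ ε ∧ ∃ (n : ℕ) (c : Fin n → Set X),
        V ⊆ ⋃ i, c i ∧ ∀ i, EMetric.diam (c i) ≤ ENNReal.ofReal ε} := by
      refine ⟨Metric.diam_nonneg, 1, fun _ => V,
        fun x hx => Set.mem_iUnion.mpr ⟨0, hx⟩, fun _ => ?_⟩
      rw [Metric.diam]; exact (ENNReal.ofReal_toReal (show Metric.ediam V ≠ ⊤ from hVtop)).ge
    refine le_csInf ⟨_, hmem⟩ ?_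
    rintro ε ⟨hε0, n, c, hcov, hdiamc⟩
    by_contra hlt
    push_neg at hlt
    let D : Fin n → Set (WeakSpace ℝ X) := fun i => @closure (WeakSpace ℝ X) _ (c i)
    have hDc : ∀ i, IsClosed (D i) := fun i => isClosed_closure
    let B : Set (WeakSpace ℝ X) := by have h := closedBall (0 : X) 1; exact h
    let U₀ : Set (WeakSpace ℝ X) := U
    have hne' : (U₀ ∩ B).Nonempty := by
      obtain ⟨x, hx⟩ := hne
      rw [hVeq] at hx
      exact ⟨x, hx⟩
    have hcov' : U₀ ∩ B ⊆ ⋃ i ∈ (Finset.univ : Finset (Fin n)), D i := by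
      intro z hz
      have hzV : z ∈ V := by rw [hVeq]; exact hz
      have hz' : z ∈ ⋃ i, c i := hcov hzV
      obtain ⟨i, hi⟩ := Set.mem_iUnion.mp hz'
      exact Set.mem_iUnion₂.mpr ⟨i, Finset.mem_univ i, subset_closure hi⟩
    obtain ⟨i, -, U', hU', hne'', hsub''⟩ :=
      cover_lemma D B hDc Finset.univ U₀ hU hne' hcov'
    let W : Set X := U' ∩ B
    have hW : RelWeakOpen W := ⟨U', hU', rfl⟩
    have hWne : W.Nonempty := hne''
    have hβW : β ≤ Metric.diam W := hdiam _ hW hWne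
    have hdW : Metric.diam W ≤ ε := by
      apply Metric.diam_le_of_forall_dist_le hε0
      intro x hx y hy
      have hx' : x ∈ weakClosure (c i) := hsub'' hx
      have hy' : y ∈ weakClosure (c i) := hsub'' hy
      exact weakClosure_dist_le hε0 (hdiamc i) hx' hy'
    linarith
  · intro hk V hV hne
    have h1 := hk V hV hne
    obtain ⟨U, hU, hVeq⟩ := hV
    have hVsub : V ⊆ closedBall (0 : X) 1 := by rw [hVeq]; exact Set.inter_subset_right
    have hVbdd : Bornology.IsBounded V := (Metric.isBounded_closedBall).subset hVsub
    have hVtop : EMetric.diam V ≠ ⊤ := hVbdd.ediam_ne_top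
    have h2 : kuratowski V ≤ Metric.diam V := by
      apply csInf_le ⟨0, fun ε hε => hε.1⟩
      refine ⟨Metric.diam_nonneg, 1, fun _ => V,
        fun x hx => Set.mem_iUnion.mpr ⟨0, hx⟩, fun _ => ?_⟩
      rw [Metric.diam]; exact (ENNReal.ofReal_toReal (show Metric.ediam V ≠ ⊤ from hVtop)).ge
    linarith
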